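/- For any real ρ with −1 < ρ < 1, any real x with ρ ≤ x ≤ 1, and 0 ≤ ρ: the quantity (1−x²)/(1−ρx) ≤ 1 and (1−ρ²)/(1−ρx) ≤ (1−ρ²)/(1−ρ) = 1+ρ, and consequently (1−x²)^{(n−4)/2}(1−ρ²)^{(n−1)/2}(1−ρx)^{−n+3/2} ≤ (1−ρ)^{−1}·exp(2)·exp(−n(x−ρ)²/(2(1−ρ²)))·exp(ρ/2) for all n ≥ 4. -/

import Mathlib

open Real

/-- Pointwise integrand bound for the tail of the sample correlation coefficient:
for `0 ≤ ρ < 1`, `ρ ≤ x ≤ 1` and `n ≥ 4`: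
`(1−x²)/(1−ρx) ≤ 1`, `(1−ρ²)/(1−ρx) ≤ (1−ρ²)/(1−ρ) = 1+ρ`, and
`(1−x²)^{(n−4)/2} (1−ρ²)^{(n−1)/2} (1−ρx)^{−n+3/2}
  ≤ (1−ρ)⁻¹ e² exp(−n(x−ρ)²/(2(1−ρ²))) e^{ρ/2}`. -/
theorem corr_integrand_bound (ρ x : ℝ) (n : ℕ) (hρ0 : 0 ≤ ρ) (hρ1 : ρ < 1)
    (hx1 : ρ ≤ x) (hx2 : x ≤ 1) (hn : 4 ≤ n) :
    (1 - x ^ 2) / (1 - ρ * x) ≤ 1 ∧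
    (1 - ρ ^ 2) / (1 - ρ * x) ≤ 1 + ρ ∧
    (1 - ρ ^ 2) / (1 - ρ) = 1 + ρ ∧
    (1 - x ^ 2) ^ (((n : ℝ) - 4) / 2) * (1 - ρ ^ 2) ^ (((n : ℝ) - 1) / 2) *
        (1 - ρ * x) ^ (-(n : ℝ) + 3 / 2) ≤
      (1 - ρ)⁻¹ * Real.exp 2 * Real.exp (-(n : ℝ) * (x - ρ) ^ 2 / (2 * (1 - ρ ^ 2))) *
        Real.exp (ρ / 2) := by
  have hx0 : 0 ≤ x := le_trans hρ0 hx1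
  have hC : 0 < 1 - ρ * x := by nlinarith
  have hCρ : 1 - ρ ≤ 1 - ρ * x := by nlinarith
  have hC2 : 1 - ρ * x ≤ 1 - ρ ^ 2 := by nlinarith
  have hρ2 : 0 < 1 - ρ ^ 2 := by nlinarith
  have hA0 : 0 ≤ 1 - x ^ 2 := by nlinarith
  have hρpos : 0 < 1 - ρ := by linarith
  have hn4 : (4:ℝ) ≤ (n:ℝ) := by exact_mod_cast hn
  refine ⟨by rw [div_le_one hC]; nlinarith, by rw [div_le_iff₀ hC]; nlinarith,
    by rw [div_eq_iff (by linarith : (1:ℝ) - ρ ≠ 0)]; ring, ?_⟩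
  set u := (x ^ 2 - ρ * x) / (1 - ρ * x) with hu
  set v := (ρ * x - ρ ^ 2) / (1 - ρ * x) with hv
  have hu0 : 0 ≤ u := div_nonneg (by nlinarith) hC.le
  have hv0 : 0 ≤ v := div_nonneg (by nlinarith) hC.le
  have hu1 : u ≤ 1 := by rw [hu, div_le_one hC]; nlinarith
  have hAC : 1 - x ^ 2 = (1 - ρ * x) * (1 - u) := by
    rw [hu, mul_sub, mul_one, mul_div_assoc', mul_div_cancel_left₀ _ hC.ne']; ring
  have hBC : 1 - ρ ^ 2 = (1 - ρ * x) * (1 + v) := by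
    rw [hv]; field_simp; ring
  have h1u : 1 - u ≤ Real.exp (-u) := by
    have := Real.add_one_le_exp (-u); linarith
  have h1v : 1 + v ≤ Real.exp v := by
    have := Real.add_one_le_exp v; linarith
  set a : ℝ := ((n:ℝ) - 4) / 2 with ha
  set b : ℝ := ((n:ℝ) - 1) / 2 with hb
  have ha0 : 0 ≤ a := by rw [ha]; linarith
  have hb0 : 0 ≤ b := by rw [hb]; linarith
  have hu1' : 0 ≤ 1 - u := by linarith
  have hv1' : 0 ≤ 1 + v := by linarith
  have step1 : (1 - x ^ 2) ^ a ≤ (1 - ρ * x) ^ a * Real.exp (-u * a) := by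
    rw [hAC, Real.mul_rpow hC.le hu1', Real.exp_mul]
    gcongr
  have step2 : (1 - ρ ^ 2) ^ b ≤ (1 - ρ * x) ^ b * Real.exp (v * b) := by
    rw [hBC, Real.mul_rpow hC.le hv1', Real.exp_mul]
    gcongr
  have hCc : 0 < (1 - ρ * x) ^ (-(n:ℝ) + 3/2) := Real.rpow_pos_of_pos hC _
  calc (1 - x ^ 2) ^ a * (1 - ρ ^ 2) ^ b * (1 - ρ * x) ^ (-(n:ℝ) + 3/2)
      ≤ ((1 - ρ * x) ^ a * Real.exp (-u * a)) * ((1 - ρ * x) ^ b * Real.exp (v * b)) *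
        (1 - ρ * x) ^ (-(n:ℝ) + 3/2) := by
        gcongr <;> positivity
    _ = (1 - ρ * x) ^ a * (1 - ρ * x) ^ b * (1 - ρ * x) ^ (-(n:ℝ) + 3/2) *
        (Real.exp (-u * a) * Real.exp (v * b)) := by ring
    _ = (1 - ρ * x)⁻¹ * Real.exp (-u * a + v * b) := by
        rw [← Real.rpow_add hC, ← Real.rpow_add hC, ← Real.exp_add,
          show a + b + (-(n:ℝ) + 3/2) = -1 by rw [ha, hb]; ring, Real.rpow_neg_one]
    _ ≤ (1 - ρ)⁻¹ * Real.exp (-(n:ℝ) * (x - ρ) ^ 2 / (2 * (1 - ρ ^ 2)) + 2 + ρ / 2) := by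
        have hE : -u * a + v * b ≤ -(n:ℝ) * (x - ρ) ^ 2 / (2 * (1 - ρ ^ 2)) + 2 + ρ / 2 := by
          have hs : u - v = (x - ρ) ^ 2 / (1 - ρ * x) := by
            rw [hu, hv, div_sub_div_same]; congr 1; ring
          have hts : (x - ρ) ^ 2 / (1 - ρ ^ 2) ≤ (x - ρ) ^ 2 / (1 - ρ * x) :=
            div_le_div_of_nonneg_left (by positivity) hC hC2
          have hkey : -(n:ℝ) * (x - ρ) ^ 2 / (2 * (1 - ρ ^ 2)) =
              -(n:ℝ) / 2 * ((x - ρ) ^ 2 / (1 - ρ ^ 2)) := by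
            field_simp
          set s : ℝ := (x - ρ) ^ 2 / (1 - ρ * x)
          set t : ℝ := (x - ρ) ^ 2 / (1 - ρ ^ 2)
          have ht0 : 0 ≤ t := div_nonneg (by positivity) hρ2.le
          have hst : u = s + v := by rw [← hs]; ring
          have hprod : 0 ≤ (n:ℝ) * (s - t) := mul_nonneg (by linarith) (by linarith)
          clear_value u v s t
          rw [hkey, ha, hb]
          have hrw : -u * (((n:ℝ) - 4) / 2) + v * (((n:ℝ) - 1) / 2) =
              3 / 2 * u - ((n:ℝ) - 1) / 2 * s := by rw [hst]; ring
          rw [hrw]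
          have hs1 : s ≤ 1 := by linarith
          linarith [hprod]
        exact mul_le_mul (inv_anti₀ hρpos hCρ) (Real.exp_le_exp.2 hE)
          (Real.exp_pos _).le (by positivity)
    _ = (1 - ρ)⁻¹ * Real.exp 2 * Real.exp (-(n:ℝ) * (x - ρ) ^ 2 / (2 * (1 - ρ ^ 2))) *
        Real.exp (ρ / 2) := by
        rw [mul_assoc, mul_assoc, ← Real.exp_add, ← Real.exp_add]
        congr 1
        ring
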